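/- Let φ ∈ L²(ℝ) and V₀ be the L²-closure of the span of integer translates {T^k φ : k ∈ ℤ}. Then f ∈ L²(ℝ) belongs to V₀ if and only if its periodized Fourier transform f̂_*(ω) is collinear to φ̂_*(ω) for almost every ω on the unit circle. -/

import Mathlib

open MeasureTheory
open scoped InnerProductSpace

instance : Fact ((0:ℝ) < 1) := ⟨one_pos⟩

open Filter
open scoped Topology ENNReal

lemma stmt13_ae_zero
    (h : AddCircle (1:ℝ) → ℂ) (hint : Integrable h (volume : Measure (AddCircle (1:ℝ))))
    (h0 : ∀ u : C(AddCircle (1:ℝ), ℂ), ∫ ω, u ω * h ω = 0) :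
    h =ᵐ[(volume : Measure (AddCircle (1:ℝ)))] 0 := by
  set μ : Measure (AddCircle (1:ℝ)) := volume with hμ
  have hsm := hint.1
  set h' : AddCircle (1:ℝ) → ℂ := hsm.mk h with hh'
  have hae : h =ᵐ[μ] h' := hsm.ae_eq_mk
  have hmeas : StronglyMeasurable h' := hsm.stronglyMeasurable_mk
  have hint' : Integrable h' μ := hint.congr hae
  -- the "sign" function
  set F : AddCircle (1:ℝ) → ℂ := fun ω => (starRingEnd ℂ) (h' ω) / ((‖h' ω‖ : ℝ) : ℂ) with hF
  have hFmeas : Measurable F := by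
    apply Measurable.div
    · exact Complex.continuous_conj.measurable.comp hmeas.measurable
    · exact Complex.measurable_ofReal.comp hmeas.measurable.norm
  have hF1 : ∀ ω, ‖F ω‖ ≤ 1 := by
    intro ω
    by_cases hz : h' ω = 0
    · simp [hF, hz]
    · have hne : ‖h' ω‖ ≠ 0 := norm_ne_zero_iff.mpr hz
      simp only [hF, norm_div, Complex.norm_real, Real.norm_eq_abs,
        abs_of_nonneg (norm_nonneg _), Complex.norm_conj]
      rw [div_le_one (lt_of_le_of_ne (norm_nonneg _) (Ne.symm hne))]
  have hFh : ∀ ω, F ω * h' ω = ((‖h' ω‖ : ℝ) : ℂ) := by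
    intro ω
    by_cases hz : h' ω = 0
    · simp [hF, hz]
    · have hne : ((‖h' ω‖ : ℝ) : ℂ) ≠ 0 := Complex.ofReal_ne_zero.mpr (norm_ne_zero_iff.mpr hz)
      rw [hF, div_mul_eq_mul_div, mul_comm, Complex.mul_conj', sq, mul_div_assoc,
        div_self hne, mul_one]
  have hFint : Integrable F μ := by
    refine Integrable.mono' (integrable_const 1) hFmeas.aestronglyMeasurable ?_
    exact Eventually.of_forall hF1
  -- approximate F in L¹ by continuous functions
  set FL : Lp ℂ 1 μ := (memLp_one_iff_integrable.mpr hFint).toLp F with hFL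
  have hdr : DenseRange ⇑(ContinuousMap.toLp (E := ℂ) 1 μ ℂ) :=
    ContinuousMap.toLp_denseRange ℂ μ ℂ ENNReal.one_ne_top
  have hex : ∀ n : ℕ, ∃ u : C(AddCircle (1:ℝ), ℂ),
      dist FL ((ContinuousMap.toLp (E := ℂ) 1 μ ℂ) u) < 1/(n+1) := by
    intro n
    exact hdr.exists_dist_lt FL (by positivity)
  choose u hu using hex
  have htend : Tendsto (fun n => (ContinuousMap.toLp (E := ℂ) 1 μ ℂ) (u n)) atTop (𝓝 FL) := by
    rw [tendsto_iff_dist_tendsto_zero]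
    refine squeeze_zero (fun n => dist_nonneg) (fun n => ?_) tendsto_one_div_add_atTop_nhds_zero_nat
    rw [dist_comm]
    exact (hu n).le
  have htm : TendstoInMeasure μ (fun n ω => u n ω) atTop F := by
    refine TendstoInMeasure.congr (fun i => ContinuousMap.coeFn_toLp μ (u i)) ?_
      (tendstoInMeasure_of_tendsto_Lp htend)
    exact MemLp.coeFn_toLp _
  obtain ⟨ns, -, haetend⟩ := htm.exists_seq_tendsto_ae
  -- truncation to the unit ball
  have htcc : Continuous fun z : ℂ => z / ((max 1 ‖z‖ : ℝ) : ℂ) := by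
    refine continuous_id.div (Complex.continuous_ofReal.comp (continuous_const.max continuous_norm)) ?_
    intro z
    exact Complex.ofReal_ne_zero.mpr (by positivity)
  set tc : C(ℂ, ℂ) := ⟨fun z => z / ((max 1 ‖z‖ : ℝ) : ℂ), htcc⟩ with htc
  have htc1 : ∀ z : ℂ, ‖tc z‖ ≤ 1 := by
    intro z
    have hpos : (0:ℝ) < max 1 ‖z‖ := by positivity
    have heq : ‖tc z‖ = ‖z‖ / max 1 ‖z‖ := by
      simp only [htc, ContinuousMap.coe_mk, norm_div, Complex.norm_real, Real.norm_eq_abs]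
      rw [abs_of_pos hpos]
    rw [heq, div_le_one hpos]
    exact le_max_right _ _
  have htc2 : ∀ z : ℂ, ‖z‖ ≤ 1 → tc z = z := by
    intro z hz
    simp only [htc, ContinuousMap.coe_mk, max_eq_left hz, Complex.ofReal_one, div_one]
  -- dominated convergence
  set v : ℕ → C(AddCircle (1:ℝ), ℂ) := fun i => tc.comp (u (ns i)) with hv
  have hDCT : Tendsto (fun i => ∫ ω, v i ω * h' ω ∂μ) atTop (𝓝 (∫ ω, F ω * h' ω ∂μ)) := by
    refine tendsto_integral_of_dominated_convergence (fun ω => ‖h' ω‖) ?_ hint'.norm ?_ ?_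
    · intro i
      exact ((v i).continuous.aestronglyMeasurable).mul hmeas.aestronglyMeasurable
    · intro i
      refine Eventually.of_forall fun ω => ?_
      rw [norm_mul]
      calc ‖v i ω‖ * ‖h' ω‖ ≤ 1 * ‖h' ω‖ :=
            mul_le_mul_of_nonneg_right (htc1 _) (norm_nonneg _)
        _ = ‖h' ω‖ := one_mul _
    · filter_upwards [haetend] with ω hω
      have h1 : Tendsto (fun i => v i ω) atTop (𝓝 (tc (F ω))) :=
        (tc.continuous.tendsto _).comp hω
      rw [htc2 _ (hF1 ω)] at h1
      exact h1.mul tendsto_const_nhds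
  have hzero : ∀ i, ∫ ω, v i ω * h' ω ∂μ = 0 := by
    intro i
    rw [← h0 (v i)]
    exact integral_congr_ae (by filter_upwards [hae] with ω hω; rw [hω])
  have hFh0 : ∫ ω, F ω * h' ω ∂μ = 0 := by
    have := hDCT
    simp only [hzero] at this
    exact tendsto_nhds_unique this tendsto_const_nhds
  have : ∫ ω, ((‖h' ω‖ : ℝ) : ℂ) ∂μ = 0 := by
    rw [← hFh0]
    exact integral_congr_ae (Eventually.of_forall fun ω => (hFh ω).symm)
  have hnorm0 : ∫ ω, ‖h' ω‖ ∂μ = 0 := by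
    have h1 : ∫ ω, ((‖h' ω‖ : ℝ) : ℂ) ∂μ = ((∫ ω, ‖h' ω‖ ∂μ : ℝ) : ℂ) := integral_ofReal
    have h2 : ((∫ ω, ‖h' ω‖ ∂μ : ℝ) : ℂ) = 0 := h1.symm.trans this
    exact_mod_cast h2
  have := (integral_eq_zero_iff_of_nonneg (fun ω => norm_nonneg _) hint'.norm).mp hnorm0
  refine hae.trans ?_
  filter_upwards [this] with ω hω
  simpa using norm_eq_zero.mp (by simpa using hω)

set_option maxHeartbeats 1000000 in
set_option synthInstance.maxHeartbeats 1000000 in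
/-- Let `φ ∈ L²(ℝ)` and `V₀` be the closure of the span of the integer translates of `φ`.
Then `f ∈ V₀` if and only if its periodized Fourier transform `f̂_*(ω)` is collinear to
`φ̂_*(ω)` for almost every `ω` on the circle.  Here `U = F_*` is the periodized Fourier
transform, the unitary determined by `f ↦ (conj f̂(θ+k))_k` which intertwines translation
with multiplication by `ω`. -/
theorem stmt13
    (T : Lp ℂ 2 (volume : Measure ℝ) ≃L[ℂ] Lp ℂ 2 (volume : Measure ℝ))
    (hT : ∀ f : Lp ℂ 2 (volume : Measure ℝ),
      ∀ᵐ x : ℝ, (T f : ℝ → ℂ) x = (f : ℝ → ℂ) (x - 1))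
    (U : Lp ℂ 2 (volume : Measure ℝ) ≃ₗᵢ[ℂ]
        Lp (lp (fun _ : ℤ => ℂ) 2) 2 (volume : Measure (AddCircle (1:ℝ))))
    (hU : ∀ (f : ℝ → ℂ), Integrable f → ∀ (hf2 : MemLp f 2 (volume : Measure ℝ)) (k : ℤ),
        ∀ᵐ θ : ℝ,
          (U (hf2.toLp f) : AddCircle (1:ℝ) → lp (fun _ : ℤ => ℂ) 2) (θ : AddCircle (1:ℝ)) k
            = starRingEnd ℂ
                (∫ x : ℝ, f x * Complex.exp (-2 * (Real.pi : ℂ) * Complex.I * (x : ℂ)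
                    * ((θ : ℂ) + (k : ℂ)))))
    (hUT : ∀ f : Lp ℂ 2 (volume : Measure ℝ), ∀ᵐ ω : AddCircle (1:ℝ),
        (U (T f) : AddCircle (1:ℝ) → lp (fun _ : ℤ => ℂ) 2) ω
          = (fourier 1 ω : ℂ) • (U f : AddCircle (1:ℝ) → lp (fun _ : ℤ => ℂ) 2) ω)
    (φ f : Lp ℂ 2 (volume : Measure ℝ)) :
    f ∈ (Submodule.span ℂ (Set.range fun k : ℤ => (T ^ k) φ)).topologicalClosure ↔
      ∀ᵐ ω : AddCircle (1:ℝ), ∃ c : ℂ,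
        (U f : AddCircle (1:ℝ) → lp (fun _ : ℤ => ℂ) 2) ω
          = c • (U φ : AddCircle (1:ℝ) → lp (fun _ : ℤ => ℂ) 2) ω := by
  clear hT hU
  -- step lemma for powers of `T`
  have step : ∀ (m : ℤ) (x : Lp ℂ 2 (volume : Measure ℝ)),
      (T ^ (m+1)) x = (T ^ m) (T x) := fun m x => by rw [zpow_add_one]; rfl
  -- `U` intertwines `T⁻¹` with `fourier (-1)`
  have hTinv : ∀ g : Lp ℂ 2 (volume : Measure ℝ), ∀ᵐ ω : AddCircle (1:ℝ),
      (U (T⁻¹ g) : AddCircle (1:ℝ) → lp (fun _ : ℤ => ℂ) 2) ω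
        = (fourier (-1) ω : ℂ) • (U g : AddCircle (1:ℝ) → lp (fun _ : ℤ => ℂ) 2) ω := by
    intro g
    filter_upwards [hUT (T⁻¹ g)] with ω hω
    have hTT : T (T⁻¹ g) = g := by
      rw [show T (T⁻¹ g) = (T * T⁻¹) g from rfl, mul_inv_cancel]; rfl
    rw [hTT] at hω
    have h1 : (fourier (-1) ω : ℂ) * fourier 1 ω = 1 := by
      rw [← fourier_add]; norm_num
    rw [hω, smul_smul, h1, one_smul]
  -- `U` intertwines `T^k` with `fourier k`
  have hgen : ∀ (k : ℤ) (g : Lp ℂ 2 (volume : Measure ℝ)), ∀ᵐ ω : AddCircle (1:ℝ),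
      (U ((T ^ k) g) : AddCircle (1:ℝ) → lp (fun _ : ℤ => ℂ) 2) ω
        = (fourier k ω : ℂ) • (U g : AddCircle (1:ℝ) → lp (fun _ : ℤ => ℂ) 2) ω := by
    intro k
    induction k using Int.induction_on with
    | zero =>
      intro g
      refine Eventually.of_forall fun ω => ?_
      rw [zpow_zero]
      rw [show (1 : Lp ℂ 2 (volume : Measure ℝ) ≃L[ℂ] Lp ℂ 2 (volume : Measure ℝ)) g = g
        from rfl]
      simp [fourier_zero]
    | succ i ih =>
      intro g
      have hstep : (T ^ ((i:ℤ)+1)) g = (T ^ (i:ℤ)) (T g) := step i g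
      rw [hstep]
      filter_upwards [ih (T g), hUT g] with ω h1 h2
      rw [h1, h2, smul_smul, ← fourier_add]
    | pred i ih =>
      intro g
      have hstep : (T ^ (-(i:ℤ)-1)) g = (T ^ (-(i:ℤ))) (T⁻¹ g) := by
        have h2 := step (-(i:ℤ)-1) (T⁻¹ g)
        rw [sub_add_cancel] at h2
        rw [show T (T⁻¹ g) = (T * T⁻¹) g from rfl, mul_inv_cancel] at h2
        exact h2.symm
      rw [hstep]
      filter_upwards [ih (T⁻¹ g), hTinv g] with ω h1 h2
      rw [h1, h2, smul_smul, ← fourier_add, show -(i:ℤ) + -1 = -(i:ℤ)-1 by ring]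
  -- the collinearity submodule
  set Φ : AddCircle (1:ℝ) → lp (fun _ : ℤ => ℂ) 2 :=
    (U φ : AddCircle (1:ℝ) → lp (fun _ : ℤ => ℂ) 2) with hΦ
  set S : Submodule ℂ (Lp (lp (fun _ : ℤ => ℂ) 2) 2 (volume : Measure (AddCircle (1:ℝ)))) :=
    { carrier := {g | ∀ᵐ ω : AddCircle (1:ℝ), ∃ c : ℂ,
        (g : AddCircle (1:ℝ) → lp (fun _ : ℤ => ℂ) 2) ω = c • Φ ω}
      add_mem' := by
        intro a b ha hb
        filter_upwards [ha, hb, Lp.coeFn_add a b] with ω ⟨c, hc⟩ ⟨d, hd⟩ hab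
        exact ⟨c + d, by rw [hab, Pi.add_apply, hc, hd, add_smul]⟩
      zero_mem' := by
        filter_upwards [Lp.coeFn_zero (lp (fun _ : ℤ => ℂ) 2) 2 (volume : Measure (AddCircle (1:ℝ)))] with ω h0
        exact ⟨0, by rw [h0, Pi.zero_apply, zero_smul]⟩
      smul_mem' := by
        intro c a ha
        filter_upwards [ha, Lp.coeFn_smul c a] with ω ⟨d, hd⟩ hca
        exact ⟨c * d, by rw [hca, Pi.smul_apply, hd, smul_smul]⟩ } with hS
  have hSmem : ∀ g : Lp (lp (fun _ : ℤ => ℂ) 2) 2 (volume : Measure (AddCircle (1:ℝ))),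
      g ∈ S ↔ ∀ᵐ ω : AddCircle (1:ℝ), ∃ c : ℂ,
        (g : AddCircle (1:ℝ) → lp (fun _ : ℤ => ℂ) 2) ω = c • Φ ω := fun g => Iff.rfl
  have hSclosed : IsClosed (S : Set (Lp (lp (fun _ : ℤ => ℂ) 2) 2 (volume : Measure (AddCircle (1:ℝ))))) := by
    refine IsSeqClosed.isClosed ?_
    intro g g0 hg hlim
    have htm := tendstoInMeasure_of_tendsto_Lp hlim
    obtain ⟨ns, -, haetend⟩ := htm.exists_seq_tendsto_ae
    have hg' : ∀ᵐ ω : AddCircle (1:ℝ), ∀ n, ∃ c : ℂ,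
        (g n : AddCircle (1:ℝ) → lp (fun _ : ℤ => ℂ) 2) ω = c • Φ ω := ae_all_iff.mpr hg
    filter_upwards [haetend, hg'] with ω hωlim hωg
    have hmem : ∀ i, (g (ns i) : AddCircle (1:ℝ) → lp (fun _ : ℤ => ℂ) 2) ω
        ∈ Submodule.span ℂ {Φ ω} := by
      intro i
      obtain ⟨c, hc⟩ := hωg (ns i)
      exact Submodule.mem_span_singleton.mpr ⟨c, hc.symm⟩
    have hcl : IsClosed ((Submodule.span ℂ {Φ ω} : Submodule ℂ (lp (fun _ : ℤ => ℂ) 2)) :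
        Set (lp (fun _ : ℤ => ℂ) 2)) :=
      Submodule.closed_of_finiteDimensional _
    have hg0mem := hcl.mem_of_tendsto hωlim (Eventually.of_forall hmem)
    obtain ⟨c, hc⟩ := Submodule.mem_span_singleton.mp hg0mem
    exact ⟨c, hc.symm⟩
  -- the preimage of S under U
  set M : Submodule ℂ (Lp ℂ 2 (volume : Measure ℝ)) :=
    Submodule.span ℂ (Set.range fun k : ℤ => (T ^ k) φ) with hM
  set S' : Submodule ℂ (Lp ℂ 2 (volume : Measure ℝ)) :=
    S.comap U.toLinearEquiv.toLinearMap with hS'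
  have hS'mem : ∀ g, g ∈ S' ↔ U g ∈ S := fun g => Iff.rfl
  have hS'closed : IsClosed (S' : Set (Lp ℂ 2 (volume : Measure ℝ))) := by
    have : (S' : Set (Lp ℂ 2 (volume : Measure ℝ))) = ⇑U ⁻¹' (S : Set _) := rfl
    rw [this]
    exact hSclosed.preimage U.continuous
  have hsub : M ≤ S' := by
    rw [hM, Submodule.span_le]
    rintro _ ⟨k, rfl⟩
    rw [SetLike.mem_coe, hS'mem]
    rw [hSmem]
    filter_upwards [hgen k φ] with ω hω
    exact ⟨fourier k ω, hω⟩
  constructor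
  · intro hf
    exact (hSmem _).mp ((hS'mem f).mp
      (Submodule.topologicalClosure_minimal _ hsub hS'closed hf))
  · -- backward direction
    intro hP
    have hMc : (Mᗮᗮ : Submodule ℂ (Lp ℂ 2 (volume : Measure ℝ))) = M.topologicalClosure :=
      Submodule.orthogonal_orthogonal_eq_closure M
    rw [← hMc]
    refine (Submodule.mem_orthogonal _ f).mpr ?_
    intro g hg
    obtain ⟨h, hhdef⟩ : ∃ h : AddCircle (1:ℝ) → ℂ, h = fun ω =>
        ⟪(U g : AddCircle (1:ℝ) → lp (fun _ : ℤ => ℂ) 2) ω, Φ ω⟫_ℂ := ⟨_, rfl⟩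
    have hint : Integrable h (volume : Measure (AddCircle (1:ℝ))) := by
      rw [hhdef]; exact L2.integrable_inner (𝕜 := ℂ) (U g) (U φ)
    have hfk : ∀ k : ℤ, ∫ ω, (fourier k ω : ℂ) * h ω = 0 := by
      intro k
      have h0 : ⟪g, (T ^ k) φ⟫_ℂ = 0 :=
        (Submodule.mem_orthogonal' _ g).mp hg _ (Submodule.subset_span ⟨k, rfl⟩)
      have h1 : ⟪U g, U ((T ^ k) φ)⟫_ℂ = 0 := by rw [U.inner_map_map]; exact h0
      rw [L2.inner_def] at h1
      rw [← h1]
      refine integral_congr_ae ?_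
      filter_upwards [hgen k φ] with ω hω
      simp only [hhdef]
      rw [hω, inner_smul_right]
    have hbdd : ∀ u : C(AddCircle (1:ℝ), ℂ), Integrable (fun ω => u ω * h ω) (volume : Measure (AddCircle (1:ℝ))) :=
      fun u => hint.bdd_mul u.continuous.aestronglyMeasurable
        (Eventually.of_forall fun ω => u.norm_coe_le_norm ω)
    set L : C(AddCircle (1:ℝ), ℂ) →ₗ[ℂ] ℂ :=
      { toFun := fun u => ∫ ω, u ω * h ω
        map_add' := fun u v => by
          simp only [ContinuousMap.add_apply, add_mul]
          exact integral_add (hbdd u) (hbdd v)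
        map_smul' := fun c u => by
          simp only [ContinuousMap.smul_apply, smul_eq_mul, mul_assoc, RingHom.id_apply]
          exact integral_const_mul c _ } with hL
    have hLb : ∀ u : C(AddCircle (1:ℝ), ℂ), ‖L u‖ ≤ (∫ ω, ‖h ω‖) * ‖u‖ := by
      intro u
      have hc : ∀ ω, ‖u ω * h ω‖ ≤ ‖u‖ * ‖h ω‖ := fun ω => by
        rw [norm_mul]
        exact mul_le_mul_of_nonneg_right (u.norm_coe_le_norm ω) (norm_nonneg _)
      calc ‖∫ ω, u ω * h ω‖ ≤ ∫ ω, ‖u ω * h ω‖ := norm_integral_le_integral_norm _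
        _ ≤ ∫ ω, ‖u‖ * ‖h ω‖ := integral_mono (hbdd u).norm (hint.norm.const_mul _) hc
        _ = (∫ ω, ‖h ω‖) * ‖u‖ := by rw [integral_const_mul]; ring
    set L' : C(AddCircle (1:ℝ), ℂ) →L[ℂ] ℂ := L.mkContinuous _ hLb with hL'
    have hker : ∀ u : C(AddCircle (1:ℝ), ℂ), ∫ ω, u ω * h ω = 0 := by
      have hcl : (Submodule.span ℂ (Set.range (@fourier 1))).topologicalClosure
          ≤ L'.ker := by
        refine Submodule.topologicalClosure_minimal _ (Submodule.span_le.mpr ?_)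
          (ContinuousLinearMap.isClosed_ker L')
        rintro _ ⟨k, rfl⟩
        rw [SetLike.mem_coe, LinearMap.mem_ker]
        exact hfk k
      intro u
      have hu : u ∈ L'.ker := hcl (by rw [span_fourier_closure_eq_top]; trivial)
      exact hu
    have hh0 : h =ᵐ[(volume : Measure (AddCircle (1:ℝ)))] 0 := stmt13_ae_zero h hint hker
    have hinner0 : ∀ᵐ ω : AddCircle (1:ℝ),
        ⟪(U g : AddCircle (1:ℝ) → lp (fun _ : ℤ => ℂ) 2) ω,
          (U f : AddCircle (1:ℝ) → lp (fun _ : ℤ => ℂ) 2) ω⟫_ℂ = 0 := by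
      filter_upwards [hP, hh0] with ω hc h0ω
      obtain ⟨c, hc⟩ := hc
      rw [hc, inner_smul_right]
      have hz : ⟪(U g : AddCircle (1:ℝ) → lp (fun _ : ℤ => ℂ) 2) ω, Φ ω⟫_ℂ = 0 := by
        have := congrFun hhdef ω
        rw [← this]
        exact h0ω
      rw [hz, mul_zero]
    rw [← U.inner_map_map g f, L2.inner_def]
    rw [integral_congr_ae hinner0, integral_zero]
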